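/- For nonzero complex numbers q, b, c, d, e, f, g, h with 0 < |q| < 1 satisfying q⁵ = bcdefgh, and such that all denominator factors below are nonzero and all series converge, there holds: ∑_{k=0}^{∞} (1 - q^{1+2k}) · (b;q)_k(c;q)_k(d;q)_k(e;q)_k(f;q)_k(g;q)_k(h;q)_k / ((q²/b;q)_k(q²/c;q)_k(q²/d;q)_k(q²/e;q)_k(q²/f;q)_k(q²/g;q)_k(q²/h;q)_k) · q^k = ∑_{k∈ℤ} (b;q)_k(c;q)_k(d;q)_k(e;q)_k(f;q)_k(g;q)_k(h;q)_k / ((q²/b;q)_k(q²/c;q)_k(q²/d;q)_k(q²/e;q)_k(q²/f;q)_k(q²/g;q)_k(q²/h;q)_k) · q^k. Equivalently, for every integer k ≥ 0, the index-(-k-1) term of the bilateral series equals minus q^{3k+1} times the product-ratio at index k (times q^k appropriately), under q⁵ = bcdefgh. -/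

import Mathlib

open Complex

noncomputable def qPoch (q x : ℂ) (k : ℤ) : ℂ :=
  if 0 ≤ k then ∏ i ∈ Finset.range k.toNat, (1 - x * q ^ i)
  else (∏ j ∈ Finset.range (-k).toNat, (1 - x * q ^ (k + (j : ℤ))))⁻¹

noncomputable def qPochInf (q x : ℂ) : ℂ := ∏' k : ℕ, (1 - x * q ^ k)

lemma qPoch_zero (q x : ℂ) : qPoch q x 0 = 1 := by simp [qPoch]

lemma qPoch_natCast (q x : ℂ) (n : ℕ) :
    qPoch q x (n : ℤ) = ∏ i ∈ Finset.range n, (1 - x * q ^ i) := by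
  simp [qPoch]

lemma qPoch_succ (q x : ℂ) (n : ℕ) :
    qPoch q x ((n : ℤ) + 1) = qPoch q x (n : ℤ) * (1 - x * q ^ n) := by
  have : ((n : ℤ) + 1) = ((n + 1 : ℕ) : ℤ) := by push_cast; ring
  rw [this, qPoch_natCast, qPoch_natCast, Finset.prod_range_succ]

lemma qPoch_negNat (q x : ℂ) (n : ℕ) :
    qPoch q x (-(n : ℤ)) = (∏ j ∈ Finset.range n, (1 - x * q ^ (-(n : ℤ) + j)))⁻¹ := by
  cases n with
  | zero => simp [qPoch]
  | succ m =>
    have hneg : ¬ (0 ≤ -((m + 1 : ℕ) : ℤ)) := by omega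
    rw [qPoch, if_neg hneg]
    norm_num

lemma qPoch_negsucc (q x : ℂ) (n : ℕ) :
    qPoch q x (-((n : ℤ) + 1)) = (1 - x * q ^ (-((n : ℤ) + 1)))⁻¹ * qPoch q x (-(n : ℤ)) := by
  have h1 : -((n : ℤ) + 1) = -((n + 1 : ℕ) : ℤ) := by push_cast; ring
  rw [h1, qPoch_negNat, qPoch_negNat, Finset.prod_range_succ', mul_inv]
  rw [mul_comm]
  congr 1
  · congr 1
    apply Finset.prod_congr rfl
    intro i _
    congr 2
    push_cast
    ring

lemma factor_ne_of_qPoch_ne (q x : ℂ) (hden : ∀ k : ℤ, qPoch q x k ≠ 0) :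
    ∀ j : ℤ, 1 - x * q ^ j ≠ 0 := by
  intro j
  rcases le_or_gt 0 j with hj | hj
  · have h := hden (j + 1)
    rw [qPoch, if_pos (by omega)] at h
    have := Finset.prod_ne_zero_iff.mp h j.toNat (by simp; omega)
    have hcast : ((j.toNat : ℕ) : ℤ) = j := by omega
    rwa [show (q : ℂ) ^ j.toNat = q ^ j by rw [← zpow_natCast, hcast]] at this
  · have h := hden j
    rw [qPoch, if_neg (by omega)] at h
    have hp : (∏ i ∈ Finset.range (-j).toNat, (1 - x * q ^ (j + (i : ℤ)))) ≠ 0 := by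
      intro h0; rw [h0] at h; simp at h
    have := Finset.prod_ne_zero_iff.mp hp 0 (by simp; omega)
    simpa using this

lemma good_of_den (q x : ℂ) (hq0 : q ≠ 0) (hx : x ≠ 0)
    (hden : ∀ k : ℤ, qPoch q (q ^ 2 / x) k ≠ 0) :
    ∀ j : ℤ, x ≠ q ^ j := by
  intro j hxj
  have hfac := factor_ne_of_qPoch_ne q (q ^ 2 / x) hden (j - 2)
  apply hfac
  have hj2 : (q : ℂ) ^ 2 * q ^ (j - 2) = q ^ j := by
    rw [← zpow_natCast q 2, ← zpow_add₀ hq0]; norm_num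
  rw [hxj, div_mul_eq_mul_div, hj2, div_self (zpow_ne_zero _ hq0), sub_self]

lemma num_factor_ne (q x : ℂ) (hq0 : q ≠ 0) (hgood : ∀ j : ℤ, x ≠ q ^ j) :
    ∀ m : ℤ, 1 - x * q ^ m ≠ 0 := by
  intro m h0
  have hx : x * q ^ m = 1 := by linear_combination -h0
  apply hgood (-m)
  rw [zpow_neg]
  exact eq_inv_of_mul_eq_one_right (by linear_combination hx)

lemma den_factor_ne (q x : ℂ) (hq0 : q ≠ 0) (hx : x ≠ 0) (hgood : ∀ j : ℤ, x ≠ q ^ j) :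
    ∀ m : ℤ, 1 - (q ^ 2 / x) * q ^ m ≠ 0 := by
  intro m h0
  apply hgood (m + 2)
  have : (q ^ 2 / x) * q ^ m = 1 := by linear_combination -h0
  field_simp at this
  rw [zpow_add₀ hq0, ← this, ← zpow_natCast q 2]
  ring

lemma qPoch_ne_zero (q x : ℂ) (hfac : ∀ m : ℤ, 1 - x * q ^ m ≠ 0) (k : ℤ) :
    qPoch q x k ≠ 0 := by
  rw [qPoch]
  split
  · apply Finset.prod_ne_zero_iff.mpr
    intro i _
    rw [show (q : ℂ) ^ (i : ℕ) = q ^ (i : ℤ) by rw [← zpow_natCast]]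
    exact hfac i
  · apply inv_ne_zero
    apply Finset.prod_ne_zero_iff.mpr
    intro i _
    exact hfac _

lemma qPoch_ratio_neg (q x : ℂ) (hq0 : q ≠ 0) (hx : x ≠ 0)
    (hgood : ∀ j : ℤ, x ≠ q ^ j) (n : ℕ) :
    qPoch q x (-((n : ℤ) + 1)) / qPoch q (q ^ 2 / x) (-((n : ℤ) + 1)) =
      (-(q / x)) ^ (2 * n + 1) * (qPoch q x (n : ℤ) / qPoch q (q ^ 2 / x) (n : ℤ)) := by
  have hnum := num_factor_ne q x hq0 hgood
  have hd := den_factor_ne q x hq0 hx hgood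
  induction n with
  | zero =>
    have h1 := hnum (-1)
    have h2 := hd (-1)
    rw [zpow_neg_one] at h1 h2
    have e1 : qPoch q x (-(((0:ℕ) : ℤ) + 1)) = (1 - x * q⁻¹)⁻¹ := by
      norm_num [qPoch, zpow_neg_one]
    have e2 : qPoch q (q^2/x) (-(((0:ℕ) : ℤ) + 1)) = (1 - (q^2/x) * q⁻¹)⁻¹ := by
      norm_num [qPoch, zpow_neg_one]
    rw [e1, e2, show (((0:ℕ)) : ℤ) = 0 by norm_num, qPoch_zero, qPoch_zero]
    have e3 : (1 - x * q⁻¹)⁻¹ / (1 - q^2/x * q⁻¹)⁻¹ = (1 - q^2/x * q⁻¹) / (1 - x * q⁻¹) := by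
      simp [div_eq_mul_inv, inv_inv]; ring
    rw [e3, div_eq_iff h1]
    field_simp
    linear_combination (q^2 - q*x) * mul_inv_cancel₀ hx
  | succ m ih =>
    have hrec : ∀ y : ℂ, qPoch q y (-((↑(m+1) : ℤ) + 1)) =
        (1 - y * q ^ (-(((m : ℤ) + 1) + 1)))⁻¹ * qPoch q y (-((m : ℤ) + 1)) := by
      intro y
      rw [qPoch_negsucc q y (m+1), show (-(↑(m+1) : ℤ)) = -((m:ℤ)+1) by push_cast; ring,
        show (-((↑(m+1) : ℤ) + 1)) = -(((m:ℤ)+1)+1) by push_cast; ring]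
    have hzp : (q : ℂ) ^ (-(((m : ℤ) + 1) + 1)) = (q ^ (m + 2 : ℕ))⁻¹ := by
      rw [show (-(((m : ℤ) + 1) + 1)) = -((m + 2 : ℕ) : ℤ) by push_cast; ring,
        zpow_neg, zpow_natCast]
    have hqn : (q : ℂ) ^ (m + 2 : ℕ) ≠ 0 := pow_ne_zero _ hq0
    have hA : (1 : ℂ) - x * (q ^ (m + 2 : ℕ))⁻¹ ≠ 0 := by
      have := hnum (-(((m : ℤ) + 1) + 1)); rwa [hzp] at this
    have hB : (1 : ℂ) - (q^2/x) * (q ^ (m + 2 : ℕ))⁻¹ ≠ 0 := by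
      have := hd (-(((m : ℤ) + 1) + 1)); rwa [hzp] at this
    have hu : (1 : ℂ) - x * q ^ m ≠ 0 := by
      have := hnum (m : ℤ); rwa [zpow_natCast] at this
    have hv : (1 : ℂ) - (q^2/x) * q ^ m ≠ 0 := by
      have := hd (m : ℤ); rwa [zpow_natCast] at this
    have hDneg := qPoch_ne_zero q (q^2/x) hd (-((m : ℤ) + 1))
    have hscal : (1 - (q^2/x) * (q ^ (m + 2 : ℕ))⁻¹) / (1 - x * (q ^ (m + 2 : ℕ))⁻¹)
        = (q/x)^2 * (1 - x * q ^ m) / (1 - (q^2/x) * q ^ m) := by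
      rw [div_eq_div_iff hA hv]
      field_simp
      ring
    rw [hrec x, hrec (q^2/x), hzp,
      show ((↑(m+1) : ℤ)) = (m : ℤ) + 1 by push_cast; ring, qPoch_succ, qPoch_succ]
    calc ((1 - x * (q ^ (m + 2 : ℕ))⁻¹)⁻¹ * qPoch q x (-((m : ℤ) + 1))) /
          ((1 - (q^2/x) * (q ^ (m + 2 : ℕ))⁻¹)⁻¹ * qPoch q (q^2/x) (-((m : ℤ) + 1)))
        = ((1 - (q^2/x) * (q ^ (m + 2 : ℕ))⁻¹) / (1 - x * (q ^ (m + 2 : ℕ))⁻¹)) *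
            (qPoch q x (-((m : ℤ) + 1)) / qPoch q (q^2/x) (-((m : ℤ) + 1))) := by
          simp only [div_eq_mul_inv, mul_inv, inv_inv]; ring
      _ = ((q/x)^2 * (1 - x * q ^ m) / (1 - (q^2/x) * q ^ m)) *
            ((-(q / x)) ^ (2 * m + 1) * (qPoch q x (m : ℤ) / qPoch q (q ^ 2 / x) (m : ℤ))) := by
          rw [hscal, ih]
      _ = (-(q / x)) ^ (2 * (m+1) + 1) *
            (qPoch q x (m : ℤ) * (1 - x * q ^ m) /
              (qPoch q (q ^ 2 / x) (m : ℤ) * (1 - (q^2/x) * q ^ m))) := by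
          rw [show 2 * (m+1) + 1 = (2*m+1) + 2 by ring,
            pow_add (-(q/x)) (2*m+1) 2, neg_sq, mul_div_mul_comm]
          ring

theorem unilateral_eq_bilateral_7psi7_second
    (q b c d e f g h : ℂ) (hq0 : q ≠ 0) (hq : ‖q‖ < 1)
    (hb : b ≠ 0) (hc : c ≠ 0) (hd : d ≠ 0) (he : e ≠ 0) (hf : f ≠ 0)
    (hg : g ≠ 0) (hh : h ≠ 0)
    (hbal : q ^ 5 = b * c * d * e * f * g * h)
    (hden : ∀ k : ℤ, qPoch q (q ^ 2 / b) k ≠ 0 ∧ qPoch q (q ^ 2 / c) k ≠ 0 ∧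
      qPoch q (q ^ 2 / d) k ≠ 0 ∧ qPoch q (q ^ 2 / e) k ≠ 0 ∧
      qPoch q (q ^ 2 / f) k ≠ 0 ∧ qPoch q (q ^ 2 / g) k ≠ 0 ∧
      qPoch q (q ^ 2 / h) k ≠ 0)
    (hsum1 : Summable fun k : ℕ => (1 - q ^ (1 + 2 * k)) *
      (qPoch q b (k : ℤ) * qPoch q c (k : ℤ) * qPoch q d (k : ℤ) *
        qPoch q e (k : ℤ) * qPoch q f (k : ℤ) * qPoch q g (k : ℤ) *
        qPoch q h (k : ℤ)) /
      (qPoch q (q ^ 2 / b) (k : ℤ) * qPoch q (q ^ 2 / c) (k : ℤ) *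
        qPoch q (q ^ 2 / d) (k : ℤ) * qPoch q (q ^ 2 / e) (k : ℤ) *
        qPoch q (q ^ 2 / f) (k : ℤ) * qPoch q (q ^ 2 / g) (k : ℤ) *
        qPoch q (q ^ 2 / h) (k : ℤ)) * q ^ k)
    (hsum2 : Summable fun k : ℤ =>
      qPoch q b k * qPoch q c k * qPoch q d k * qPoch q e k * qPoch q f k *
        qPoch q g k * qPoch q h k /
      (qPoch q (q ^ 2 / b) k * qPoch q (q ^ 2 / c) k * qPoch q (q ^ 2 / d) k *
        qPoch q (q ^ 2 / e) k * qPoch q (q ^ 2 / f) k * qPoch q (q ^ 2 / g) k *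
        qPoch q (q ^ 2 / h) k) * q ^ k) :
    (∑' k : ℕ, (1 - q ^ (1 + 2 * k)) *
      (qPoch q b (k : ℤ) * qPoch q c (k : ℤ) * qPoch q d (k : ℤ) *
        qPoch q e (k : ℤ) * qPoch q f (k : ℤ) * qPoch q g (k : ℤ) *
        qPoch q h (k : ℤ)) /
      (qPoch q (q ^ 2 / b) (k : ℤ) * qPoch q (q ^ 2 / c) (k : ℤ) *
        qPoch q (q ^ 2 / d) (k : ℤ) * qPoch q (q ^ 2 / e) (k : ℤ) *
        qPoch q (q ^ 2 / f) (k : ℤ) * qPoch q (q ^ 2 / g) (k : ℤ) *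
        qPoch q (q ^ 2 / h) (k : ℤ)) * q ^ k) =
    ∑' k : ℤ,
      qPoch q b k * qPoch q c k * qPoch q d k * qPoch q e k * qPoch q f k *
        qPoch q g k * qPoch q h k /
      (qPoch q (q ^ 2 / b) k * qPoch q (q ^ 2 / c) k * qPoch q (q ^ 2 / d) k *
        qPoch q (q ^ 2 / e) k * qPoch q (q ^ 2 / f) k * qPoch q (q ^ 2 / g) k *
        qPoch q (q ^ 2 / h) k) * q ^ k := by
  set F : ℤ → ℂ := fun k =>
      qPoch q b k * qPoch q c k * qPoch q d k * qPoch q e k * qPoch q f k *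
        qPoch q g k * qPoch q h k /
      (qPoch q (q ^ 2 / b) k * qPoch q (q ^ 2 / c) k * qPoch q (q ^ 2 / d) k *
        qPoch q (q ^ 2 / e) k * qPoch q (q ^ 2 / f) k * qPoch q (q ^ 2 / g) k *
        qPoch q (q ^ 2 / h) k) * q ^ k with hFdef
  have hgb : ∀ j : ℤ, b ≠ q ^ j := good_of_den q b hq0 hb (fun k => (hden k).1)
  have hgc : ∀ j : ℤ, c ≠ q ^ j := good_of_den q c hq0 hc (fun k => (hden k).2.1)
  have hgd : ∀ j : ℤ, d ≠ q ^ j := good_of_den q d hq0 hd (fun k => (hden k).2.2.1)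
  have hge : ∀ j : ℤ, e ≠ q ^ j := good_of_den q e hq0 he (fun k => (hden k).2.2.2.1)
  have hgf : ∀ j : ℤ, f ≠ q ^ j := good_of_den q f hq0 hf (fun k => (hden k).2.2.2.2.1)
  have hgg : ∀ j : ℤ, g ≠ q ^ j := good_of_den q g hq0 hg (fun k => (hden k).2.2.2.2.2.1)
  have hgh : ∀ j : ℤ, h ≠ q ^ j := good_of_den q h hq0 hh (fun k => (hden k).2.2.2.2.2.2)
  have split : ∀ k : ℤ, F k =
      (qPoch q b k / qPoch q (q ^ 2 / b) k) * (qPoch q c k / qPoch q (q ^ 2 / c) k) *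
      (qPoch q d k / qPoch q (q ^ 2 / d) k) * (qPoch q e k / qPoch q (q ^ 2 / e) k) *
      (qPoch q f k / qPoch q (q ^ 2 / f) k) * (qPoch q g k / qPoch q (q ^ 2 / g) k) *
      (qPoch q h k / qPoch q (q ^ 2 / h) k) * q ^ k := by
    intro k
    rw [hFdef]
    simp only [div_eq_mul_inv, mul_inv]
    ring
  have key : ∀ n : ℕ, F (-((n : ℤ) + 1)) = -q ^ (1 + 2 * n) * F (n : ℤ) := by
    intro n
    rw [split, split]
    rw [qPoch_ratio_neg q b hq0 hb hgb n, qPoch_ratio_neg q c hq0 hc hgc n,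
      qPoch_ratio_neg q d hq0 hd hgd n, qPoch_ratio_neg q e hq0 he hge n,
      qPoch_ratio_neg q f hq0 hf hgf n, qPoch_ratio_neg q g hq0 hg hgg n,
      qPoch_ratio_neg q h hq0 hh hgh n]
    have h7 : (-(q/b)) * (-(q/c)) * (-(q/d)) * (-(q/e)) * (-(q/f)) * (-(q/g)) * (-(q/h))
        = -(q^2) := by
      have e7 : (-(q/b)) * (-(q/c)) * (-(q/d)) * (-(q/e)) * (-(q/f)) * (-(q/g)) * (-(q/h))
          = -(q^7 / (b*c*d*e*f*g*h)) := by ring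
      rw [e7, ← hbal]
      congr 1
      rw [div_eq_iff (pow_ne_zero 5 hq0)]
      ring
    have hzp1 : (q : ℂ) ^ (-((n:ℤ)+1)) = (q ^ (n+1 : ℕ))⁻¹ := by
      rw [show (-((n:ℤ)+1)) = -((n+1 : ℕ) : ℤ) by push_cast; ring, zpow_neg, zpow_natCast]
    have hC : (-(q/b))^(2*n+1) * (-(q/c))^(2*n+1) * (-(q/d))^(2*n+1) * (-(q/e))^(2*n+1) *
        (-(q/f))^(2*n+1) * (-(q/g))^(2*n+1) * (-(q/h))^(2*n+1) * q ^ (-((n:ℤ)+1))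
        = -q ^ (1 + 2*n) * q ^ ((n:ℤ)) := by
      rw [hzp1, zpow_natCast, ← mul_pow, ← mul_pow, ← mul_pow, ← mul_pow, ← mul_pow,
        ← mul_pow, h7, Odd.neg_pow (odd_two_mul_add_one n), ← pow_mul]
      rw [show 2 * (2*n+1) = (1 + 2*n) + n + (n+1) by ring, pow_add, pow_add]
      field_simp
    linear_combination ((qPoch q b (n:ℤ) / qPoch q (q ^ 2 / b) (n:ℤ)) *
      (qPoch q c (n:ℤ) / qPoch q (q ^ 2 / c) (n:ℤ)) *
      (qPoch q d (n:ℤ) / qPoch q (q ^ 2 / d) (n:ℤ)) *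
      (qPoch q e (n:ℤ) / qPoch q (q ^ 2 / e) (n:ℤ)) *
      (qPoch q f (n:ℤ) / qPoch q (q ^ 2 / f) (n:ℤ)) *
      (qPoch q g (n:ℤ) / qPoch q (q ^ 2 / g) (n:ℤ)) *
      (qPoch q h (n:ℤ) / qPoch q (q ^ 2 / h) (n:ℤ))) * hC
  have hS1 : Summable (fun n : ℕ => F (n : ℤ)) :=
    hsum2.comp_injective (fun a1 a2 h12 => by exact_mod_cast h12)
  have hS2 : Summable (fun n : ℕ => F (-((n : ℤ) + 1))) :=
    hsum2.comp_injective (fun a1 a2 h12 => by omega)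
  have hterm : ∀ n : ℕ, (1 - q ^ (1 + 2 * n)) *
      (qPoch q b (n : ℤ) * qPoch q c (n : ℤ) * qPoch q d (n : ℤ) *
        qPoch q e (n : ℤ) * qPoch q f (n : ℤ) * qPoch q g (n : ℤ) *
        qPoch q h (n : ℤ)) /
      (qPoch q (q ^ 2 / b) (n : ℤ) * qPoch q (q ^ 2 / c) (n : ℤ) *
        qPoch q (q ^ 2 / d) (n : ℤ) * qPoch q (q ^ 2 / e) (n : ℤ) *
        qPoch q (q ^ 2 / f) (n : ℤ) * qPoch q (q ^ 2 / g) (n : ℤ) *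
        qPoch q (q ^ 2 / h) (n : ℤ)) * q ^ n = F (n : ℤ) + F (-((n : ℤ) + 1)) := by
    intro n
    rw [key n, hFdef]
    simp only
    rw [zpow_natCast]
    ring
  calc (∑' k : ℕ, (1 - q ^ (1 + 2 * k)) *
      (qPoch q b (k : ℤ) * qPoch q c (k : ℤ) * qPoch q d (k : ℤ) *
        qPoch q e (k : ℤ) * qPoch q f (k : ℤ) * qPoch q g (k : ℤ) *
        qPoch q h (k : ℤ)) /
      (qPoch q (q ^ 2 / b) (k : ℤ) * qPoch q (q ^ 2 / c) (k : ℤ) *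
        qPoch q (q ^ 2 / d) (k : ℤ) * qPoch q (q ^ 2 / e) (k : ℤ) *
        qPoch q (q ^ 2 / f) (k : ℤ) * qPoch q (q ^ 2 / g) (k : ℤ) *
        qPoch q (q ^ 2 / h) (k : ℤ)) * q ^ k)
      = ∑' n : ℕ, (F (n : ℤ) + F (-((n : ℤ) + 1))) := tsum_congr hterm
    _ = (∑' n : ℕ, F (n : ℤ)) + ∑' n : ℕ, F (-((n : ℤ) + 1)) := Summable.tsum_add hS1 hS2
    _ = ∑' k : ℤ, F k := by
        rw [tsum_of_nat_of_neg_add_one hS1 hS2]
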